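/- Let Δ ∈ (0,1] and let γ = (1, Δ, Δ, Δ²)/(1+Δ)² be the two-qubit Gibbs vector. For every p ∈ Δ₄, the following are equivalent: (i) f(q) ≥ 0 for every q ∈ T₊(p); (ii) f(p^π) ≥ 0 for every permutation π of {1,2,3,4}, where p^π are the extreme points of the future thermal cone T₊(p). -/

import Mathlib

set_option maxHeartbeats 1000000


open Finset

/-- The probability simplex Δ₄ ⊂ ℝ⁴. -/
def inSimplex (p : Fin 4 → ℝ) : Prop := (∀ i, 0 ≤ p i) ∧ ∑ i, p i = 1

/-- The entanglement witness f(q) = 4 q₁ q₄ − (q₂ − q₃)². -/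
noncomputable def fwit (q : Fin 4 → ℝ) : ℝ := 4 * q 0 * q 3 - (q 1 - q 2) ^ 2

/-- The two-qubit Gibbs vector γ = (1, Δ, Δ, Δ²)/(1+Δ)². -/
noncomputable def gibbs (Δ : ℝ) : Fin 4 → ℝ :=
  ![1 / (1 + Δ) ^ 2, Δ / (1 + Δ) ^ 2, Δ / (1 + Δ) ^ 2, Δ ^ 2 / (1 + Δ) ^ 2]

/-- The thermomajorization curve L_p(x) = min_{c ≥ 0} (c x + Σᵢ max(pᵢ − c γᵢ, 0)). -/
noncomputable def Lcurve (γ p : Fin 4 → ℝ) (x : ℝ) : ℝ :=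
  ⨅ c : { c : ℝ // 0 ≤ c }, (c.1 * x + ∑ i, max (p i - c.1 * γ i) 0)

/-- The future thermal cone T₊(p): states whose thermomajorization curve lies below that of p. -/
def futureCone (γ p : Fin 4 → ℝ) : Set (Fin 4 → ℝ) :=
  { q | inSimplex q ∧ ∀ x ∈ Set.Icc (0 : ℝ) 1, Lcurve γ q x ≤ Lcurve γ p x }

/-- x_k = γ_{π(1)} + ⋯ + γ_{π(k)}  (0-based permutation, k = 0,…,4). -/
noncomputable def partialX (γ : Fin 4 → ℝ) (π : Equiv.Perm (Fin 4)) (k : ℕ) : ℝ :=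
  ∑ j : Fin 4, if (j : ℕ) < k then γ (π j) else 0

/-- The extreme point p^π of the future thermal cone: p^π_{π(k)} = L_p(x_k) − L_p(x_{k−1}). -/
noncomputable def extremePt (γ p : Fin 4 → ℝ) (π : Equiv.Perm (Fin 4)) : Fin 4 → ℝ :=
  fun i =>
    Lcurve γ p (partialX γ π ((π.symm i : ℕ) + 1)) - Lcurve γ p (partialX γ π (π.symm i))


instance : Nonempty { c : ℝ // 0 ≤ c } := ⟨⟨0, le_refl 0⟩⟩

lemma Lcurve_bdd (γ q : Fin 4 → ℝ) {x : ℝ} (hx : 0 ≤ x) :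
    BddBelow (Set.range fun c : { c : ℝ // 0 ≤ c } =>
      (c.1 * x + ∑ i, max (q i - c.1 * γ i) 0)) := by
  refine ⟨0, ?_⟩
  rintro y ⟨d, rfl⟩
  have h1 : 0 ≤ d.1 * x := mul_nonneg d.2 hx
  have h2 : 0 ≤ ∑ i, max (q i - d.1 * γ i) 0 :=
    Finset.sum_nonneg fun i _ => le_max_right _ 0
  dsimp only
  linarith

lemma Lcurve_le (γ q : Fin 4 → ℝ) {x : ℝ} (hx : 0 ≤ x) {c : ℝ} (hc : 0 ≤ c) :
    Lcurve γ q x ≤ c * x + ∑ i, max (q i - c * γ i) 0 :=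
  ciInf_le (Lcurve_bdd γ q hx) ⟨c, hc⟩

lemma le_Lcurve (γ q : Fin 4 → ℝ) {x : ℝ} {b : ℝ}
    (h : ∀ c : ℝ, 0 ≤ c → b ≤ c * x + ∑ i, max (q i - c * γ i) 0) :
    b ≤ Lcurve γ q x :=
  le_ciInf fun c => h c.1 c.2

lemma Lcurve_nonneg (γ q : Fin 4 → ℝ) {x : ℝ} (hx : 0 ≤ x) : 0 ≤ Lcurve γ q x :=
  le_Lcurve γ q fun c hc => by
    have h2 : 0 ≤ ∑ i, max (q i - c * γ i) 0 :=
      Finset.sum_nonneg fun i _ => le_max_right _ 0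
    nlinarith

lemma Lcurve_mono (γ q : Fin 4 → ℝ) {x y : ℝ} (hx : 0 ≤ x) (hxy : x ≤ y) :
    Lcurve γ q x ≤ Lcurve γ q y :=
  le_ciInf fun c => (Lcurve_le γ q hx c.2).trans (by
    have := mul_le_mul_of_nonneg_left hxy c.2
    linarith)

lemma Lcurve_concave (γ q : Fin 4 → ℝ) {x y a b : ℝ} (hx : 0 ≤ x) (hy : 0 ≤ y)
    (ha : 0 ≤ a) (hb : 0 ≤ b) (hab : a + b = 1) :
    a * Lcurve γ q x + b * Lcurve γ q y ≤ Lcurve γ q (a * x + b * y) :=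
  le_ciInf fun c => by
    have h1 := mul_le_mul_of_nonneg_left (Lcurve_le γ q hx c.2 : Lcurve γ q x ≤ _) ha
    have h2 := mul_le_mul_of_nonneg_left (Lcurve_le γ q hy c.2 : Lcurve γ q y ≤ _) hb
    have h3 : a * (c.1 * x + ∑ i, max (q i - c.1 * γ i) 0)
        + b * (c.1 * y + ∑ i, max (q i - c.1 * γ i) 0)
        = c.1 * (a * x + b * y) + ∑ i, max (q i - c.1 * γ i) 0 := by
      linear_combination (∑ i, max (q i - c.1 * γ i) 0) * hab
    linarith

lemma Lcurve_chord (γ q : Fin 4 → ℝ) {a x b : ℝ} (ha : 0 ≤ a) (hax : a ≤ x)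
    (hxb : x ≤ b) (hab : a < b) :
    (b - x) * Lcurve γ q a + (x - a) * Lcurve γ q b ≤ (b - a) * Lcurve γ q x := by
  have hd : (0:ℝ) < b - a := by linarith
  have h := Lcurve_concave (a := (b - x)/(b - a)) (b := (x - a)/(b - a))
    (x := a) (y := b) γ q ha (by linarith : (0:ℝ) ≤ b)
    (div_nonneg (by linarith) hd.le) (div_nonneg (by linarith) hd.le)
    (by field_simp; ring)
  have hne : b - a ≠ 0 := ne_of_gt hd
  have hpt : (b - x)/(b-a) * a + (x - a)/(b-a) * b = x := by
    rw [div_mul_eq_mul_div, div_mul_eq_mul_div, ← add_div, div_eq_iff hne]; ring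
  rw [hpt] at h
  have h2 := mul_le_mul_of_nonneg_left h hd.le
  calc (b - x) * Lcurve γ q a + (x - a) * Lcurve γ q b
      = (b - a) * ((b - x)/(b-a) * Lcurve γ q a + (x - a)/(b-a) * Lcurve γ q b) := by
        field_simp
    _ ≤ (b - a) * Lcurve γ q x := h2

lemma Lcurve_zero {γ q : Fin 4 → ℝ} (hq : ∀ i, 0 ≤ q i) (hγ : ∀ i, 0 < γ i) :
    Lcurve γ q 0 = 0 := by
  refine le_antisymm ?_ (Lcurve_nonneg γ q le_rfl)
  set c : ℝ := ∑ j, q j / γ j with hc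
  have hc0 : 0 ≤ c := Finset.sum_nonneg fun j _ => div_nonneg (hq j) (hγ j).le
  have h := Lcurve_le γ q le_rfl hc0
  have hz : ∑ i, max (q i - c * γ i) 0 = 0 := by
    refine Finset.sum_eq_zero fun i _ => max_eq_right ?_
    have h1 : q i / γ i ≤ c :=
      Finset.single_le_sum (f := fun j => q j / γ j)
        (fun j _ => div_nonneg (hq j) (hγ j).le) (Finset.mem_univ i)
    rw [div_le_iff₀ (hγ i)] at h1
    nlinarith
  rw [hz] at h
  linarith

lemma Lcurve_one {γ q : Fin 4 → ℝ} (hq : ∀ i, 0 ≤ q i) (hq1 : ∑ i, q i = 1)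
    (hγ1 : ∑ i, γ i = 1) : Lcurve γ q 1 = 1 := by
  refine le_antisymm ?_ ?_
  · have h := Lcurve_le γ q (by norm_num : (0:ℝ) ≤ 1) (le_refl (0:ℝ))
    have hz : ∑ i, max (q i - 0 * γ i) 0 = 1 := by
      rw [← hq1]
      exact Finset.sum_congr rfl fun i _ => by rw [zero_mul, sub_zero, max_eq_left (hq i)]
    rw [hz] at h
    linarith
  · refine le_Lcurve γ q fun c hc => ?_
    have h1 : ∑ i, (q i - c * γ i) ≤ ∑ i, max (q i - c * γ i) 0 :=
      Finset.sum_le_sum fun i _ => le_max_left _ _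
    have h2 : ∑ i, (q i - c * γ i) = 1 - c := by
      rw [Finset.sum_sub_distrib, hq1, ← Finset.mul_sum, hγ1]; ring
    rw [h2] at h1
    linarith

lemma partialX_nonneg {γ : Fin 4 → ℝ} (hγ : ∀ i, 0 ≤ γ i) (π : Equiv.Perm (Fin 4))
    (k : ℕ) : 0 ≤ partialX γ π k :=
  Finset.sum_nonneg fun j _ => by split_ifs; exacts [hγ _, le_rfl]

lemma partialX_mono {γ : Fin 4 → ℝ} (hγ : ∀ i, 0 ≤ γ i) (π : Equiv.Perm (Fin 4))
    {k l : ℕ} (hkl : k ≤ l) : partialX γ π k ≤ partialX γ π l :=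
  Finset.sum_le_sum fun j _ => by
    split_ifs with h1 h2 h2
    · exact le_rfl
    · omega
    · exact hγ _
    · exact le_rfl

lemma partialX_zero (γ : Fin 4 → ℝ) (π : Equiv.Perm (Fin 4)) : partialX γ π 0 = 0 :=
  Finset.sum_eq_zero fun j _ => by simp

lemma partialX_four {γ : Fin 4 → ℝ} (hγ1 : ∑ i, γ i = 1) (π : Equiv.Perm (Fin 4)) :
    partialX γ π 4 = 1 := by
  rw [partialX]
  rw [show (∑ j : Fin 4, if (j : ℕ) < 4 then γ (π j) else 0) = ∑ j : Fin 4, γ (π j) from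
    Finset.sum_congr rfl fun j _ => if_pos j.isLt]
  rw [Equiv.sum_comp π γ, hγ1]

lemma prefix_le_Lcurve {γ : Fin 4 → ℝ} (q : Fin 4 → ℝ) (π : Equiv.Perm (Fin 4)) (k : ℕ) :
    (∑ j : Fin 4, if (j : ℕ) < k then q (π j) else 0) ≤ Lcurve γ q (partialX γ π k) := by
  refine le_Lcurve γ q fun c hc => ?_
  have h1 : ∑ i, max (q i - c * γ i) 0 = ∑ j : Fin 4, max (q (π j) - c * γ (π j)) 0 :=
    (Equiv.sum_comp π fun i => max (q i - c * γ i) 0).symm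
  have h2 : ∀ j : Fin 4, (if (j : ℕ) < k then q (π j) else 0)
      ≤ max (q (π j) - c * γ (π j)) 0 + c * (if (j : ℕ) < k then γ (π j) else 0) := by
    intro j
    split_ifs with h
    · have := le_max_left (q (π j) - c * γ (π j)) 0; linarith
    · have := le_max_right (q (π j) - c * γ (π j)) 0; simpa using this
  calc (∑ j : Fin 4, if (j : ℕ) < k then q (π j) else 0)
      ≤ ∑ j : Fin 4, (max (q (π j) - c * γ (π j)) 0
          + c * (if (j : ℕ) < k then γ (π j) else 0)) := Finset.sum_le_sum fun j _ => h2 j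
    _ = (∑ j : Fin 4, max (q (π j) - c * γ (π j)) 0) + c * partialX γ π k := by
        rw [Finset.sum_add_distrib, ← Finset.mul_sum, partialX]
    _ = c * partialX γ π k + ∑ i, max (q i - c * γ i) 0 := by rw [h1]; ring

lemma extremePt_apply (γ p : Fin 4 → ℝ) (π : Equiv.Perm (Fin 4)) (j : Fin 4) :
    extremePt γ p π (π j) =
      Lcurve γ p (partialX γ π ((j : ℕ) + 1)) - Lcurve γ p (partialX γ π (j : ℕ)) := by
  simp [extremePt]

lemma extremePt_curve_le {γ p : Fin 4 → ℝ} (hγ : ∀ i, 0 < γ i) (hγ1 : ∑ i, γ i = 1)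
    (hp0 : ∀ i, 0 ≤ p i) (hp1 : ∑ i, p i = 1) (π : Equiv.Perm (Fin 4)) :
    ∀ x ∈ Set.Icc (0:ℝ) 1, Lcurve γ (extremePt γ p π) x ≤ Lcurve γ p x := by
  intro x hx
  obtain ⟨hx0, hx1⟩ := hx
  set v := extremePt γ p π with hv
  have hγ0 : ∀ i, (0:ℝ) ≤ γ i := fun i => (hγ i).le
  have hgg0 := hγ (π 0); have hgg1 := hγ (π 1); have hgg2 := hγ (π 2); have hgg3 := hγ (π 3)
  have hfin4 : ∀ s : Fin 4 → ℝ, s (π 0) + s (π 1) + s (π 2) + s (π 3) = ∑ i, s i := by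
    intro s; rw [← Equiv.sum_comp π s, Fin.sum_univ_four]
  have hsum4 : γ (π 0) + γ (π 1) + γ (π 2) + γ (π 3) = 1 := by rw [hfin4 γ, hγ1]
  have hX1 : partialX γ π 1 = γ (π 0) := by
    simp [partialX, Fin.sum_univ_four, show ((0:Fin 4):ℕ)=0 from rfl,
      show ((1:Fin 4):ℕ)=1 from rfl, show ((2:Fin 4):ℕ)=2 from rfl,
      show ((3:Fin 4):ℕ)=3 from rfl]
  have hX2 : partialX γ π 2 = γ (π 0) + γ (π 1) := by
    simp [partialX, Fin.sum_univ_four, show ((0:Fin 4):ℕ)=0 from rfl,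
      show ((1:Fin 4):ℕ)=1 from rfl, show ((2:Fin 4):ℕ)=2 from rfl,
      show ((3:Fin 4):ℕ)=3 from rfl]
  have hX3 : partialX γ π 3 = γ (π 0) + γ (π 1) + γ (π 2) := by
    simp [partialX, Fin.sum_univ_four, show ((0:Fin 4):ℕ)=0 from rfl,
      show ((1:Fin 4):ℕ)=1 from rfl, show ((2:Fin 4):ℕ)=2 from rfl,
      show ((3:Fin 4):ℕ)=3 from rfl]
  have hL0 : Lcurve γ p 0 = 0 := Lcurve_zero hp0 hγ
  have hL1 : Lcurve γ p 1 = 1 := Lcurve_one hp0 hp1 hγ1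
  set a1 := Lcurve γ p (γ (π 0)) with ha1
  set a2 := Lcurve γ p (γ (π 0) + γ (π 1)) with ha2
  set a3 := Lcurve γ p (γ (π 0) + γ (π 1) + γ (π 2)) with ha3
  -- values of v
  have hv0 : v (π 0) = a1 := by
    rw [hv, extremePt_apply]
    norm_num [partialX_zero, hL0, hX1]
    rfl
  have hv1 : v (π 1) = a2 - a1 := by
    rw [hv, extremePt_apply]
    norm_num [hX1, hX2]
    rfl
  have hv2 : v (π 2) = a3 - a2 := by
    rw [hv, extremePt_apply]
    norm_num [hX2, hX3]
    rfl
  have hv3 : v (π 3) = 1 - a3 := by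
    rw [hv, extremePt_apply]
    have h4 : partialX γ π (((3:Fin 4):ℕ) + 1) = 1 := by
      rw [show ((3:Fin 4):ℕ)+1 = 4 from rfl]
      rw [partialX]
      rw [show (∑ j : Fin 4, if (j : ℕ) < 4 then γ (π j) else 0) = ∑ j : Fin 4, γ (π j) from
        Finset.sum_congr rfl fun j _ => if_pos j.isLt]
      rw [Equiv.sum_comp π γ, hγ1]
    rw [h4, show ((3:Fin 4):ℕ) = 3 from rfl, hX3, hL1]
  -- monotonicity of the a's
  have ham0 : 0 ≤ a1 := Lcurve_nonneg γ p hgg0.le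
  have ham1 : a1 ≤ a2 := Lcurve_mono γ p hgg0.le (by linarith)
  have ham2 : a2 ≤ a3 := Lcurve_mono γ p (by linarith) (by linarith)
  have ham3 : a3 ≤ 1 := by
    rw [← hL1]; exact Lcurve_mono γ p (by linarith) (by linarith)
  -- chord inequalities giving decreasing slopes
  have c01 : γ (π 0) * a2 ≤ (γ (π 0) + γ (π 1)) * a1 := by
    have h := Lcurve_chord γ p (le_refl (0:ℝ)) hgg0.le (by linarith : γ (π 0) ≤ γ (π 0) + γ (π 1))
      (by linarith : (0:ℝ) < γ (π 0) + γ (π 1))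
    rw [hL0] at h; nlinarith [h]
  have c12 : γ (π 2) * a1 + γ (π 1) * a3 ≤ (γ (π 1) + γ (π 2)) * a2 := by
    have h := Lcurve_chord γ p hgg0.le (by linarith : γ (π 0) ≤ γ (π 0) + γ (π 1))
      (by linarith : γ (π 0) + γ (π 1) ≤ γ (π 0) + γ (π 1) + γ (π 2))
      (by linarith : γ (π 0) < γ (π 0) + γ (π 1) + γ (π 2))
    nlinarith [h]
  have c23 : γ (π 3) * a2 + γ (π 2) ≤ (γ (π 2) + γ (π 3)) * a3 := by
    have h := Lcurve_chord γ p (by linarith : (0:ℝ) ≤ γ (π 0) + γ (π 1))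
      (by linarith : γ (π 0) + γ (π 1) ≤ γ (π 0) + γ (π 1) + γ (π 2))
      (by linarith : γ (π 0) + γ (π 1) + γ (π 2) ≤ 1)
      (by linarith : γ (π 0) + γ (π 1) < 1)
    rw [hL1] at h; nlinarith [h]
  -- slopes
  set s0 := a1 / γ (π 0) with hs0
  set s1 := (a2 - a1) / γ (π 1) with hs1
  set s2 := (a3 - a2) / γ (π 2) with hs2
  set s3 := (1 - a3) / γ (π 3) with hs3
  have hm0 : a1 = s0 * γ (π 0) := (div_mul_cancel₀ a1 (ne_of_gt hgg0)).symm
  have hm1 : a2 - a1 = s1 * γ (π 1) := (div_mul_cancel₀ _ (ne_of_gt hgg1)).symm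
  have hm2 : a3 - a2 = s2 * γ (π 2) := (div_mul_cancel₀ _ (ne_of_gt hgg2)).symm
  have hm3 : 1 - a3 = s3 * γ (π 3) := (div_mul_cancel₀ _ (ne_of_gt hgg3)).symm
  have hs10 : s1 ≤ s0 := by
    rw [hs1, hs0, div_le_div_iff₀ hgg1 hgg0]; nlinarith [c01]
  have hs21 : s2 ≤ s1 := by
    rw [hs2, hs1, div_le_div_iff₀ hgg2 hgg1]; nlinarith [c12]
  have hs32 : s3 ≤ s2 := by
    rw [hs3, hs2, div_le_div_iff₀ hgg3 hgg2]; nlinarith [c23]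
  have hs0n : 0 ≤ s0 := div_nonneg ham0 hgg0.le
  have hs1n : 0 ≤ s1 := div_nonneg (by linarith) hgg1.le
  have hs2n : 0 ≤ s2 := div_nonneg (by linarith) hgg2.le
  have hs3n : 0 ≤ s3 := div_nonneg (by linarith) hgg3.le
  have hmaxsum : ∀ c : ℝ, ∑ i, max (v i - c * γ i) 0
      = max (v (π 0) - c * γ (π 0)) 0 + max (v (π 1) - c * γ (π 1)) 0
        + max (v (π 2) - c * γ (π 2)) 0 + max (v (π 3) - c * γ (π 3)) 0 := by
    intro c
    rw [← Equiv.sum_comp π (fun i => max (v i - c * γ i) 0)]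
    simp [Fin.sum_univ_four]
  clear_value v a1 a2 a3 s0 s1 s2 s3
  have hs20 : s2 ≤ s0 := le_trans hs21 hs10
  have hs30 : s3 ≤ s0 := le_trans hs32 hs20
  have hs31 : s3 ≤ s1 := le_trans hs32 hs21
  have ha2' : a2 = a1 + s1 * γ (π 1) := by linarith only [hm1]
  have ha3' : a3 = a2 + s2 * γ (π 2) := by linarith only [hm2]
  have ha4' : (1:ℝ) = a3 + s3 * γ (π 3) := by linarith only [hm3]
  rcases le_or_gt x (γ (π 0)) with hc0 | hc0
  · -- x ∈ [0, X1], slope s0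
    have hb := Lcurve_le γ v hx0 hs0n
    rw [hmaxsum s0, hv0, hv1, hv2, hv3] at hb
    rw [max_eq_right (by linarith only [hm0] : a1 - s0 * γ (π 0) ≤ 0),
        max_eq_right (by linarith only [hm1, mul_le_mul_of_nonneg_right hs10 hgg1.le] :
          a2 - a1 - s0 * γ (π 1) ≤ 0),
        max_eq_right (by linarith only [hm2, mul_le_mul_of_nonneg_right hs20 hgg2.le] :
          a3 - a2 - s0 * γ (π 2) ≤ 0),
        max_eq_right (by linarith only [hm3, mul_le_mul_of_nonneg_right hs30 hgg3.le] :
          1 - a3 - s0 * γ (π 3) ≤ 0)] at hb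
    have hch := Lcurve_chord γ p (le_refl (0:ℝ)) hx0 hc0 hgg0
    rw [hL0, ← ha1, hm0] at hch
    have hfin : γ (π 0) * (s0 * x) ≤ γ (π 0) * Lcurve γ p x := by linarith only [hch]
    have := le_of_mul_le_mul_left hfin hgg0
    linarith
  rcases le_or_gt x (γ (π 0) + γ (π 1)) with hc1 | hc1
  · -- x ∈ [X1, X2], slope s1
    have hb := Lcurve_le γ v hx0 hs1n
    rw [hmaxsum s1, hv0, hv1, hv2, hv3] at hb
    rw [max_eq_left (by linarith only [hm0, mul_le_mul_of_nonneg_right hs10 hgg0.le] :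
          0 ≤ a1 - s1 * γ (π 0)),
        max_eq_right (by linarith only [hm1] : a2 - a1 - s1 * γ (π 1) ≤ 0),
        max_eq_right (by linarith only [hm2, mul_le_mul_of_nonneg_right hs21 hgg2.le] :
          a3 - a2 - s1 * γ (π 2) ≤ 0),
        max_eq_right (by linarith only [hm3, mul_le_mul_of_nonneg_right hs31 hgg3.le] :
          1 - a3 - s1 * γ (π 3) ≤ 0)] at hb
    have hch := Lcurve_chord γ p hgg0.le hc0.le hc1 (by linarith : γ (π 0) < γ (π 0) + γ (π 1))
    rw [← ha1, ← ha2, ha2'] at hch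
    have hfin : γ (π 1) * (s1 * x + (a1 - s1 * γ (π 0))) ≤ γ (π 1) * Lcurve γ p x := by
      linarith only [hch]
    have := le_of_mul_le_mul_left hfin hgg1
    linarith
  rcases le_or_gt x (γ (π 0) + γ (π 1) + γ (π 2)) with hc2 | hc2
  · -- x ∈ [X2, X3], slope s2
    have hb := Lcurve_le γ v hx0 hs2n
    rw [hmaxsum s2, hv0, hv1, hv2, hv3] at hb
    rw [max_eq_left (by linarith only [hm0, mul_le_mul_of_nonneg_right hs20 hgg0.le] :
          0 ≤ a1 - s2 * γ (π 0)),
        max_eq_left (by linarith only [hm1, mul_le_mul_of_nonneg_right hs21 hgg1.le] :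
          0 ≤ a2 - a1 - s2 * γ (π 1)),
        max_eq_right (by linarith only [hm2] : a3 - a2 - s2 * γ (π 2) ≤ 0),
        max_eq_right (by linarith only [hm3, mul_le_mul_of_nonneg_right hs32 hgg3.le] :
          1 - a3 - s2 * γ (π 3) ≤ 0)] at hb
    have hch := Lcurve_chord γ p (by linarith : (0:ℝ) ≤ γ (π 0) + γ (π 1)) hc1.le hc2
      (by linarith : γ (π 0) + γ (π 1) < γ (π 0) + γ (π 1) + γ (π 2))
    rw [← ha2, ← ha3, ha3'] at hch
    have hfin : γ (π 2) * (s2 * x + (a2 - s2 * (γ (π 0) + γ (π 1)))) ≤ γ (π 2) * Lcurve γ p x := by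
      linarith only [hch]
    have := le_of_mul_le_mul_left hfin hgg2
    linarith
  · -- x ∈ [X3, 1], slope s3
    have hb := Lcurve_le γ v hx0 hs3n
    rw [hmaxsum s3, hv0, hv1, hv2, hv3] at hb
    rw [max_eq_left (by linarith only [hm0, mul_le_mul_of_nonneg_right hs30 hgg0.le] :
          0 ≤ a1 - s3 * γ (π 0)),
        max_eq_left (by linarith only [hm1, mul_le_mul_of_nonneg_right hs31 hgg1.le] :
          0 ≤ a2 - a1 - s3 * γ (π 1)),
        max_eq_left (by linarith only [hm2, mul_le_mul_of_nonneg_right hs32 hgg2.le] :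
          0 ≤ a3 - a2 - s3 * γ (π 2)),
        max_eq_right (by linarith only [hm3] : 1 - a3 - s3 * γ (π 3) ≤ 0)] at hb
    have hch := Lcurve_chord γ p (by linarith : (0:ℝ) ≤ γ (π 0) + γ (π 1) + γ (π 2)) hc2.le hx1
      (by linarith : γ (π 0) + γ (π 1) + γ (π 2) < 1)
    rw [hL1, ← ha3] at hch
    have hg3eq : 1 - (γ (π 0) + γ (π 1) + γ (π 2)) = γ (π 3) := by linarith only [hsum4]
    rw [hg3eq] at hch
    have hm3x : (1 - a3) * (x - (γ (π 0) + γ (π 1) + γ (π 2)))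
        = s3 * γ (π 3) * (x - (γ (π 0) + γ (π 1) + γ (π 2))) := by rw [hm3]
    have ha3sum : a3 * (γ (π 0) + γ (π 1) + γ (π 2) + γ (π 3)) = a3 * 1 := by rw [hsum4]
    have hfin : γ (π 3) * (s3 * x + (a3 - s3 * (γ (π 0) + γ (π 1) + γ (π 2))))
        ≤ γ (π 3) * Lcurve γ p x := by linarith only [hch, hm3x, ha3sum]
    have := le_of_mul_le_mul_left hfin hgg3
    linarith

lemma extremePt_simplex {γ p : Fin 4 → ℝ} (hγ : ∀ i, 0 < γ i) (hγ1 : ∑ i, γ i = 1)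
    (hp0 : ∀ i, 0 ≤ p i) (hp1 : ∑ i, p i = 1) (π : Equiv.Perm (Fin 4)) :
    inSimplex (extremePt γ p π) := by
  have hγ0 : ∀ i, (0:ℝ) ≤ γ i := fun i => (hγ i).le
  constructor
  · intro i
    have h := Lcurve_mono γ p (partialX_nonneg hγ0 π (π.symm i))
      (partialX_mono hγ0 π (Nat.le_succ (π.symm i)))
    simp only [extremePt]
    linarith
  · have hre : ∑ i, extremePt γ p π i
        = ∑ k : Fin 4, (Lcurve γ p (partialX γ π ((k : ℕ) + 1))
            - Lcurve γ p (partialX γ π (k : ℕ))) := by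
      exact Equiv.sum_comp π.symm (fun k : Fin 4 => Lcurve γ p (partialX γ π ((k : ℕ) + 1))
            - Lcurve γ p (partialX γ π (k : ℕ)))
    rw [hre, Fin.sum_univ_four]
    have e0 : ((0:Fin 4):ℕ) = 0 := rfl
    have e1 : ((1:Fin 4):ℕ) = 1 := rfl
    have e2 : ((2:Fin 4):ℕ) = 2 := rfl
    have e3 : ((3:Fin 4):ℕ) = 3 := rfl
    rw [e0, e1, e2, e3]
    have hL0 : Lcurve γ p (partialX γ π 0) = 0 := by
      rw [partialX_zero]; exact Lcurve_zero hp0 hγ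
    have hL4 : Lcurve γ p (partialX γ π (3+1)) = 1 := by
      rw [show (3+1 : ℕ) = 4 from rfl, partialX_four hγ1]
      exact Lcurve_one hp0 hp1 hγ1
    rw [hL0, hL4]
    ring

lemma gibbs_pos {Δ : ℝ} (hΔ0 : 0 < Δ) : ∀ i, 0 < gibbs Δ i := by
  have h1 : (0:ℝ) < 1 + Δ := by linarith
  intro i
  fin_cases i
  · exact div_pos one_pos (pow_pos h1 2)
  · exact div_pos hΔ0 (pow_pos h1 2)
  · exact div_pos hΔ0 (pow_pos h1 2)
  · exact div_pos (pow_pos hΔ0 2) (pow_pos h1 2)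

lemma gibbs_sum {Δ : ℝ} (hΔ0 : 0 < Δ) : ∑ i, gibbs Δ i = 1 := by
  have h1 : (1 + Δ) ≠ 0 := by positivity
  simp [gibbs, Fin.sum_univ_four]
  field_simp
  ring

lemma partialX_le_one {γ : Fin 4 → ℝ} (hγ : ∀ i, 0 ≤ γ i) (hγ1 : ∑ i, γ i = 1)
    (π : Equiv.Perm (Fin 4)) (k : ℕ) : partialX γ π k ≤ 1 := by
  have h : partialX γ π k ≤ ∑ j : Fin 4, γ (π j) :=
    Finset.sum_le_sum fun j _ => by split_ifs; exacts [le_rfl, hγ _]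
  rwa [Equiv.sum_comp π γ, hγ1] at h

lemma futureCone_subset_hull {γ p : Fin 4 → ℝ} (hγ : ∀ i, 0 < γ i) (hγ1 : ∑ i, γ i = 1)
    (hp0 : ∀ i, 0 ≤ p i) (hp1 : ∑ i, p i = 1) :
    futureCone γ p ⊆ convexHull ℝ (Set.range (extremePt γ p)) := by
  intro q hq
  by_contra hq'
  have hγ0 : ∀ i, (0:ℝ) ≤ γ i := fun i => (hγ i).le
  obtain ⟨hqs, hqc⟩ := hq
  have hfin : (Set.range (extremePt γ p)).Finite := Set.finite_range _
  have hclosed : IsClosed (convexHull ℝ (Set.range (extremePt γ p))) :=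
    (hfin.isCompact_convexHull (𝕜 := ℝ)).isClosed
  obtain ⟨f, u, hfu, huq⟩ :=
    geometric_hahn_banach_closed_point (convex_convexHull ℝ _) hclosed hq'
  -- f as a weight vector
  have hval : ∀ r : Fin 4 → ℝ, f r = ∑ i, r i * f (Pi.single i 1) := by
    intro r
    conv_lhs => rw [pi_eq_sum_univ r]
    rw [map_sum]
    refine Finset.sum_congr rfl fun i _ => ?_
    rw [map_smul, smul_eq_mul]
    congr 2
    funext j
    simp [Pi.single_apply, eq_comm]
  set w : Fin 4 → ℝ := fun i => f (Pi.single i 1) with hw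
  -- sorting permutation: w decreasing along π
  set π : Equiv.Perm (Fin 4) := Tuple.sort (fun i => -(w i)) with hπ
  have hmono : Monotone ((fun i => -(w i)) ∘ π) := Tuple.monotone_sort _
  have hw10 : w (π 1) ≤ w (π 0) := by
    have := hmono (show (0:Fin 4) ≤ 1 by decide); simpa using this
  have hw21 : w (π 2) ≤ w (π 1) := by
    have := hmono (show (1:Fin 4) ≤ 2 by decide); simpa using this
  have hw32 : w (π 3) ≤ w (π 2) := by
    have := hmono (show (2:Fin 4) ≤ 3 by decide); simpa using this
  -- the extreme point for this ordering
  set v : Fin 4 → ℝ := extremePt γ p π with hv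
  have hvmem : v ∈ convexHull ℝ (Set.range (extremePt γ p)) :=
    subset_convexHull ℝ _ ⟨π, rfl⟩
  -- prefix bounds
  have hpref : ∀ k : ℕ, (∑ j : Fin 4, if (j : ℕ) < k then q (π j) else 0)
      ≤ Lcurve γ p (partialX γ π k) := by
    intro k
    refine (prefix_le_Lcurve q π k).trans (hqc _ ⟨partialX_nonneg hγ0 π k, partialX_le_one hγ0 hγ1 π k⟩)
  have hsimp4 : ∀ s : Fin 4 → ℝ, s (π 0) + s (π 1) + s (π 2) + s (π 3) = ∑ i, s i := by
    intro s; rw [← Equiv.sum_comp π s, Fin.sum_univ_four]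
  have hU1 : q (π 0) ≤ Lcurve γ p (partialX γ π 1) := by
    have h := hpref 1
    simpa [Fin.sum_univ_four, show ((0:Fin 4):ℕ)=0 from rfl, show ((1:Fin 4):ℕ)=1 from rfl,
      show ((2:Fin 4):ℕ)=2 from rfl, show ((3:Fin 4):ℕ)=3 from rfl] using h
  have hU2 : q (π 0) + q (π 1) ≤ Lcurve γ p (partialX γ π 2) := by
    have h := hpref 2
    simpa [Fin.sum_univ_four, show ((0:Fin 4):ℕ)=0 from rfl, show ((1:Fin 4):ℕ)=1 from rfl,
      show ((2:Fin 4):ℕ)=2 from rfl, show ((3:Fin 4):ℕ)=3 from rfl] using h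
  have hU3 : q (π 0) + q (π 1) + q (π 2) ≤ Lcurve γ p (partialX γ π 3) := by
    have h := hpref 3
    have h3 : (∑ j : Fin 4, if (j : ℕ) < 3 then q (π j) else 0)
        = q (π 0) + q (π 1) + q (π 2) := by
      simp [Fin.sum_univ_four, show ((0:Fin 4):ℕ)=0 from rfl, show ((1:Fin 4):ℕ)=1 from rfl,
        show ((2:Fin 4):ℕ)=2 from rfl, show ((3:Fin 4):ℕ)=3 from rfl]
    rwa [h3] at h
  -- vertex prefixes
  have hL0 : Lcurve γ p (partialX γ π 0) = 0 := by
    rw [partialX_zero]; exact Lcurve_zero hp0 hγ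
  have hv0 : v (π 0) = Lcurve γ p (partialX γ π 1) := by
    rw [hv, extremePt_apply]
    norm_num [show ((0:Fin 4):ℕ)=0 from rfl, hL0]
  have hv1 : v (π 1) = Lcurve γ p (partialX γ π 2) - Lcurve γ p (partialX γ π 1) := by
    rw [hv, extremePt_apply]
    norm_num [show ((1:Fin 4):ℕ)=1 from rfl]
  have hv2 : v (π 2) = Lcurve γ p (partialX γ π 3) - Lcurve γ p (partialX γ π 2) := by
    rw [hv, extremePt_apply]
    norm_num [show ((2:Fin 4):ℕ)=2 from rfl]
  -- total sums
  have hq4 : q (π 0) + q (π 1) + q (π 2) + q (π 3) = 1 := by rw [hsimp4 q, hqs.2]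
  have hv4 : v (π 0) + v (π 1) + v (π 2) + v (π 3) = 1 := by
    rw [hsimp4 v, (extremePt_simplex hγ hγ1 hp0 hp1 π).2]
  -- Abel summation comparison
  have hfq : f q = q (π 0) * w (π 0) + q (π 1) * w (π 1) + q (π 2) * w (π 2) + q (π 3) * w (π 3) := by
    rw [hval q, ← hsimp4 (fun i => q i * w i)]
  have hfv : f v = v (π 0) * w (π 0) + v (π 1) * w (π 1) + v (π 2) * w (π 2) + v (π 3) * w (π 3) := by
    rw [hval v, ← hsimp4 (fun i => v i * w i)]
  have hcompare : f q ≤ f v := by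
    rw [hfq, hfv]
    have h1 : 0 ≤ (w (π 0) - w (π 1)) * (v (π 0) - q (π 0)) :=
      mul_nonneg (by linarith) (by linarith [hU1, hv0])
    have h2 : 0 ≤ (w (π 1) - w (π 2)) * ((v (π 0) + v (π 1)) - (q (π 0) + q (π 1))) :=
      mul_nonneg (by linarith) (by linarith [hU2, hv0, hv1])
    have h3 : 0 ≤ (w (π 2) - w (π 3)) * ((v (π 0) + v (π 1) + v (π 2)) - (q (π 0) + q (π 1) + q (π 2))) :=
      mul_nonneg (by linarith) (by linarith [hU3, hv0, hv1, hv2])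
    have h4 : w (π 3) * (v (π 0) + v (π 1) + v (π 2) + v (π 3))
        = w (π 3) * (q (π 0) + q (π 1) + q (π 2) + q (π 3)) := by rw [hq4, hv4]
    nlinarith [h1, h2, h3, h4]
  exact absurd (hfu v hvmem) (by linarith [huq, hcompare])

lemma witness_convex : Convex ℝ {r : Fin 4 → ℝ | 0 ≤ r 0 ∧ 0 ≤ r 3 ∧ 0 ≤ fwit r} := by
  rintro r ⟨hr0, hr3, hrf⟩ s ⟨hs0, hs3, hsf⟩ a b ha hb hab
  have hc0 : (a • r + b • s) 0 = a * r 0 + b * s 0 := by simp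
  have hc1 : (a • r + b • s) 1 = a * r 1 + b * s 1 := by simp
  have hc2 : (a • r + b • s) 2 = a * r 2 + b * s 2 := by simp
  have hc3 : (a • r + b • s) 3 = a * r 3 + b * s 3 := by simp
  have hrf' : (r 1 - r 2)^2 ≤ 4 * r 0 * r 3 := by simp only [fwit] at hrf; linarith
  have hsf' : (s 1 - s 2)^2 ≤ 4 * s 0 * s 3 := by simp only [fwit] at hsf; linarith
  refine ⟨by rw [hc0]; positivity, by rw [hc3]; positivity, ?_⟩
  simp only [fwit, hc0, hc1, hc2, hc3]
  have h1 : ((r 1 - r 2)*(s 1 - s 2))^2 ≤ (2*(r 0 * s 3 + r 3 * s 0))^2 := by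
    have := mul_le_mul hrf' hsf' (sq_nonneg _) (by nlinarith [hrf', sq_nonneg (r 1 - r 2)])
    nlinarith [sq_nonneg (r 0 * s 3 - r 3 * s 0), this]
  have h3 : 0 ≤ 2*(r 0 * s 3 + r 3 * s 0) := by positivity
  have h4 : (r 1 - r 2)*(s 1 - s 2) ≤ 2*(r 0 * s 3 + r 3 * s 0) := by nlinarith [h1, h3]
  nlinarith [mul_nonneg (mul_nonneg ha hb) (sub_nonneg.2 h4),
    mul_nonneg (mul_nonneg ha ha) (sub_nonneg.2 hrf'),
    mul_nonneg (mul_nonneg hb hb) (sub_nonneg.2 hsf')]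

/-- f ≥ 0 on the whole future thermal cone T₊(p) iff f ≥ 0 on all of its
extreme points p^π, π ranging over the 24 permutations of the four levels. -/
theorem nonentanglable_iff_extreme_points
    (Δ : ℝ) (hΔ0 : 0 < Δ) (hΔ1 : Δ ≤ 1)
    (p : Fin 4 → ℝ) (hp : inSimplex p) :
    (∀ q ∈ futureCone (gibbs Δ) p, 0 ≤ fwit q) ↔
      (∀ π : Equiv.Perm (Fin 4), 0 ≤ fwit (extremePt (gibbs Δ) p π)) := by
  have hγpos := gibbs_pos hΔ0
  have hγ1 := gibbs_sum hΔ0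
  obtain ⟨hp0, hp1⟩ := hp
  constructor
  · intro h π
    exact h _ ⟨extremePt_simplex hγpos hγ1 hp0 hp1 π, extremePt_curve_le hγpos hγ1 hp0 hp1 π⟩
  · intro h q hq
    have hqC : q ∈ {r : Fin 4 → ℝ | 0 ≤ r 0 ∧ 0 ≤ r 3 ∧ 0 ≤ fwit r} := by
      apply convexHull_min ?_ witness_convex (futureCone_subset_hull hγpos hγ1 hp0 hp1 hq)
      rintro _ ⟨π, rfl⟩
      exact ⟨(extremePt_simplex hγpos hγ1 hp0 hp1 π).1 0,
        (extremePt_simplex hγpos hγ1 hp0 hp1 π).1 3, h π⟩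
    exact hqC.2.2
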